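/- arXiv:2508.18065 — 3 statements merged into one kernel-verified Lean document; each statement's English description precedes it below -/
import Mathlib

section
/- Let ω* : ℝ → ℝ² be continuously differentiable and 2π-periodic, and suppose: (i) there is α > 0 with ‖(−sin z, cos z) + (ω*)'(z)‖ ≥ α for all z ∈ ℝ; (ii) the interface map Φ^{ω*} is injective modulo 2π, i.e. Φ^{ω*}(z₁) = Φ^{ω*}(z₂) implies z₁ − z₂ ∈ 2πℤ; (iii) ‖Φ^{ω*}(z)‖ ≠ 2 for all z ∈ ℝ. Then there exists δ > 0 such that every continuously differentiable 2π-periodic map ω : ℝ → ℝ² with sup_z ‖ω(z) − ω*(z)‖ + sup_z ‖ω'(z) − (ω*)'(z)‖ ≤ δ satisfies: Φ^{ω} is injective modulo 2π, ‖Φ^{ω}(z)‖ ≠ 2 for all z ∈ ℝ, and ‖(−sin z, cos z) + ω'(z)‖ ≥ α/2 for all z ∈ ℝ. -/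
open Real

/-- The point `(a, b)` of the Euclidean plane `ℝ²`. -/
noncomputable def vec2 (a b : ℝ) : EuclideanSpace ℝ (Fin 2) :=
  (EuclideanSpace.equiv (Fin 2) ℝ).symm ![a, b]

/-- The interface map associated to a displacement `ω` of the unit circle:
`Φ^{ω}(z) = (cos z, sin z) + ω(z)`. -/
noncomputable def interfaceMap (ω : ℝ → EuclideanSpace ℝ (Fin 2)) (z : ℝ) :
    EuclideanSpace ℝ (Fin 2) :=
  vec2 (Real.cos z) (Real.sin z) + ω z

lemma continuous_vec2 {u v : ℝ → ℝ} (hu : Continuous u) (hv : Continuous v) :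
    Continuous fun z => vec2 (u z) (v z) := by
  unfold vec2
  apply (EuclideanSpace.equiv (Fin 2) ℝ).symm.continuous.comp
  apply continuous_pi
  intro i
  fin_cases i <;> simpa

lemma hasDerivAt_vec2cs (z : ℝ) :
    HasDerivAt (fun z => vec2 (Real.cos z) (Real.sin z)) (vec2 (-Real.sin z) (Real.cos z)) z := by
  have h1 : HasDerivAt (fun z : ℝ => (![Real.cos z, Real.sin z] : Fin 2 → ℝ))
      ![-Real.sin z, Real.cos z] z := by
    rw [hasDerivAt_pi]
    intro i
    fin_cases i
    · simpa using Real.hasDerivAt_cos z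
    · simpa using Real.hasDerivAt_sin z
  have h2 := ((EuclideanSpace.equiv (Fin 2) ℝ).symm.toContinuousLinearMap.hasFDerivAt).comp_hasDerivAt z h1
  exact h2

lemma periodic_deriv'' {E : Type*} [NormedAddCommGroup E] [NormedSpace ℝ E] {f : ℝ → E} {c : ℝ}
    (hf : Function.Periodic f c) : Function.Periodic (deriv f) c := by
  intro z
  have h : (fun x => f (x + c)) = f := funext hf
  have h2 : deriv (fun x => f (x + c)) z = deriv f (z + c) := deriv_comp_add_const f c z
  rw [← h2, h]

lemma periodic_interfaceMap {ω : ℝ → EuclideanSpace ℝ (Fin 2)}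
    (hω : Function.Periodic ω (2 * π)) : Function.Periodic (interfaceMap ω) (2 * π) := by
  intro z
  unfold interfaceMap
  rw [Real.cos_add_two_pi, Real.sin_add_two_pi, hω z]

lemma hasDerivAt_interfaceMap {ω : ℝ → EuclideanSpace ℝ (Fin 2)} (hω : ContDiff ℝ 1 ω) (z : ℝ) :
    HasDerivAt (interfaceMap ω) (vec2 (-Real.sin z) (Real.cos z) + deriv ω z) z :=
  (hasDerivAt_vec2cs z).add ((hω.differentiable one_ne_zero).differentiableAt.hasDerivAt)

lemma reduce_mod (z : ℝ) : ∃ y ∈ Set.Ico (0:ℝ) (2*π), ∃ k : ℤ, z = y + 2*π*k := by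
  have h2π : (0:ℝ) < 2*π := by positivity
  refine ⟨2*π * Int.fract (z/(2*π)), ⟨mul_nonneg h2π.le (Int.fract_nonneg _), ?_⟩,
    ⌊z/(2*π)⌋, ?_⟩
  · nlinarith [Int.fract_lt_one (z/(2*π)), Real.pi_pos]
  · have h := Int.fract_add_floor (z/(2*π))
    have h2 : 2*π * (Int.fract (z/(2*π)) + (⌊z/(2*π)⌋:ℝ)) = z := by
      rw [h]; field_simp
    linear_combination -h2

set_option maxHeartbeats 1000000 in
/-- Stability of injectivity and non-degeneracy of the interface under small `C¹`
perturbations of the displacement. -/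
theorem interface_injectivity_stability
    (ωstar : ℝ → EuclideanSpace ℝ (Fin 2))
    (hC1 : ContDiff ℝ 1 ωstar)
    (hper : Function.Periodic ωstar (2 * π))
    (α : ℝ) (hα : 0 < α)
    (hnd : ∀ z : ℝ, α ≤ ‖vec2 (-Real.sin z) (Real.cos z) + deriv ωstar z‖)
    (hinj : ∀ z₁ z₂ : ℝ, interfaceMap ωstar z₁ = interfaceMap ωstar z₂ →
      ∃ k : ℤ, z₁ - z₂ = 2 * π * k)
    (hbd : ∀ z : ℝ, ‖interfaceMap ωstar z‖ ≠ 2) :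
    ∃ δ > 0, ∀ ω : ℝ → EuclideanSpace ℝ (Fin 2),
      ContDiff ℝ 1 ω →
      Function.Periodic ω (2 * π) →
      (∀ z : ℝ, ‖ω z - ωstar z‖ + ‖deriv ω z - deriv ωstar z‖ ≤ δ) →
      (∀ z₁ z₂ : ℝ, interfaceMap ω z₁ = interfaceMap ω z₂ →
        ∃ k : ℤ, z₁ - z₂ = 2 * π * k) ∧
      (∀ z : ℝ, ‖interfaceMap ω z‖ ≠ 2) ∧
      (∀ z : ℝ, α / 2 ≤ ‖vec2 (-Real.sin z) (Real.cos z) + deriv ω z‖) := by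
  have hπ := Real.pi_pos
  have hπ3 := Real.pi_gt_three
  set f := interfaceMap ωstar with hf_def
  set F := fun z : ℝ => vec2 (-Real.sin z) (Real.cos z) + deriv ωstar z with hF_def
  have hfd : ∀ z, HasDerivAt f (F z) z := hasDerivAt_interfaceMap hC1
  have hfc : Continuous f := by
    rw [continuous_iff_continuousAt]; exact fun z => (hfd z).continuousAt
  have hFc : Continuous F :=
    (continuous_vec2 (Real.continuous_sin.neg) Real.continuous_cos).add
      (hC1.continuous_deriv le_rfl)
  have hfper : Function.Periodic f (2*π) := periodic_interfaceMap hper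
  have hFper : Function.Periodic F (2*π) := by
    intro z
    simp only [hF_def]
    rw [Real.cos_add_two_pi, Real.sin_add_two_pi, periodic_deriv'' hper z]
  have hfper' : ∀ (x : ℝ) (k : ℤ), f (x + 2*π*k) = f x := by
    intro x k
    have := (hfper.int_mul k) x
    rwa [mul_comm ((k:ℝ)) (2*π)] at this
  have hFper' : ∀ (x : ℝ) (k : ℤ), F (x + 2*π*k) = F x := by
    intro x k
    have := (hFper.int_mul k) x
    rwa [mul_comm ((k:ℝ)) (2*π)] at this
  -- Step 1 : boundary gap m
  obtain ⟨zm, hzm, hzmmin⟩ := isCompact_Icc.exists_isMinOn (Set.nonempty_Icc.2 (by positivity))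
    ((continuous_abs.comp ((hfc.norm).sub continuous_const)).continuousOn :
      ContinuousOn (fun z => |‖f z‖ - 2|) (Set.Icc 0 (2*π)))
  set m := |‖f zm‖ - 2| with hm_def
  have hm_pos : 0 < m := abs_pos.2 (sub_ne_zero.2 (hbd zm))
  have hm_all : ∀ z : ℝ, m ≤ |‖f z‖ - 2| := by
    intro z
    obtain ⟨y, hy, k, hzk⟩ := reduce_mod z
    have : f z = f y := by rw [hzk, hfper']
    rw [this]
    exact hzmmin ⟨hy.1, hy.2.le⟩
  -- Step 2 : uniform continuity of F
  have hUC : ∃ r : ℝ, 0 < r ∧ r ≤ 1 ∧ ∀ a b : ℝ, |a - b| ≤ r → ‖F a - F b‖ ≤ α / 8 := by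
    have hK : IsCompact (Set.Icc (-1 : ℝ) (2*π+1)) := isCompact_Icc
    have hu := hK.uniformContinuousOn_of_continuous hFc.continuousOn
    rw [Metric.uniformContinuousOn_iff] at hu
    obtain ⟨d₀, hd₀, hd⟩ := hu (α/9) (by positivity)
    refine ⟨min (d₀/2) 1, lt_min (by positivity) one_pos, min_le_right _ _, ?_⟩
    intro a b hab
    obtain ⟨y, hy, k, hak⟩ := reduce_mod a
    have hb' : b - 2*π*k ∈ Set.Icc (-1 : ℝ) (2*π+1) := by
      have h1 : |a - b| ≤ 1 := hab.trans (min_le_right _ _)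
      have h2 : b - 2*π*k = y - (a - b) := by rw [hak]; ring
      obtain ⟨hl, hr⟩ := abs_le.1 h1
      rw [h2]
      exact ⟨by linarith [hy.1], by linarith [hy.2.le]⟩
    have hy' : y ∈ Set.Icc (-1 : ℝ) (2*π+1) := ⟨by linarith [hy.1], by linarith [hy.2.le]⟩
    have hFa : F a = F y := by rw [hak, hFper']
    have hFb : F b = F (b - 2*π*k) := by
      have hb : b = (b - 2*π*k) + 2*π*k := by ring
      conv_lhs => rw [hb]
      rw [hFper']
    rw [hFa, hFb, ← dist_eq_norm]
    have hdist : dist y (b - 2*π*k) < d₀ := by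
      rw [Real.dist_eq]
      have : y - (b - 2*π*k) = a - b := by rw [hak]; ring
      rw [this]
      have := hab.trans (min_le_left _ _)
      linarith
    have h9 := hd y hy' (b - 2*π*k) hb' hdist
    linarith [h9]
  obtain ⟨r, hr0, hr1, hFuc⟩ := hUC
  -- Step 3 : global separation ε
  have hKc : IsCompact (Set.Icc (0:ℝ) (2*π) ×ˢ Set.Icc r (2*π - r)) :=
    isCompact_Icc.prod isCompact_Icc
  have hKne : (Set.Icc (0:ℝ) (2*π) ×ˢ Set.Icc r (2*π - r)).Nonempty := by
    refine ⟨(0, r), ⟨⟨le_refl 0, by positivity⟩, ⟨le_refl r, by nlinarith⟩⟩⟩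
  have hGc : Continuous (fun p : ℝ × ℝ => ‖f (p.1 + p.2) - f p.1‖) :=
    ((hfc.comp (continuous_fst.add continuous_snd)).sub (hfc.comp continuous_fst)).norm
  obtain ⟨p₀, hp₀, hp₀min⟩ := hKc.exists_isMinOn hKne hGc.continuousOn
  set ε := ‖f (p₀.1 + p₀.2) - f p₀.1‖ with hε_def
  have hε_pos : 0 < ε := by
    rcases eq_or_lt_of_le (norm_nonneg (f (p₀.1 + p₀.2) - f p₀.1)) with h | h
    · exfalso
      have heq : f (p₀.1 + p₀.2) = f p₀.1 := by
        rw [← sub_eq_zero]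
        exact norm_eq_zero.1 h.symm
      obtain ⟨k, hk⟩ := hinj _ _ heq
      have hk' : p₀.2 = 2*π*k := by linarith [hk]
      have hp2 := hp₀.2
      rcases le_or_gt (k:ℝ) 0 with hk0 | hk0
      · have : 2*π*(k:ℝ) ≤ 0 := by nlinarith
        have := hp2.1; rw [hk'] at this; linarith
      · have hk1 : (1:ℝ) ≤ (k:ℝ) := by exact_mod_cast hk0
        have : 2*π ≤ 2*π*(k:ℝ) := by nlinarith
        have h2 := hp2.2; rw [hk'] at h2; linarith
    · exact h
  -- the final δ
  refine ⟨min (min (α/8) (m/3)) (ε/3), lt_min (lt_min (by positivity) (by positivity))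
    (by positivity), ?_⟩
  set δ := min (min (α/8) (m/3)) (ε/3) with hδ_def
  have hδα : δ ≤ α/8 := (min_le_left _ _).trans (min_le_left _ _)
  have hδm : δ ≤ m/3 := (min_le_left _ _).trans (min_le_right _ _)
  have hδε : δ ≤ ε/3 := min_le_right _ _
  intro ω hω hωper hclose
  have hc0 : ∀ z, ‖ω z - ωstar z‖ ≤ δ := fun z =>
    le_trans (le_add_of_nonneg_right (norm_nonneg _)) (hclose z)
  have hc1 : ∀ z, ‖deriv ω z - deriv ωstar z‖ ≤ δ := fun z =>
    le_trans (le_add_of_nonneg_left (norm_nonneg _)) (hclose z)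
  set g := interfaceMap ω with hg_def
  set G := fun z : ℝ => vec2 (-Real.sin z) (Real.cos z) + deriv ω z with hG_def
  have hgd : ∀ z, HasDerivAt g (G z) z := hasDerivAt_interfaceMap hω
  have hgper : Function.Periodic g (2*π) := periodic_interfaceMap hωper
  have hgper' : ∀ (x : ℝ) (k : ℤ), g (x + 2*π*k) = g x := by
    intro x k
    have := (hgper.int_mul k) x
    rwa [mul_comm ((k:ℝ)) (2*π)] at this
  have hGF : ∀ z, ‖G z - F z‖ ≤ δ := by
    intro z
    have : G z - F z = deriv ω z - deriv ωstar z := by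
      simp only [hG_def, hF_def]; abel
    rw [this]; exact hc1 z
  have hfg : ∀ z, ‖f z - g z‖ ≤ δ := by
    intro z
    have : f z - g z = ωstar z - ω z := by
      simp only [hf_def, hg_def, interfaceMap]; abel
    rw [this, norm_sub_rev]; exact hc0 z
  -- conclusion (c)
  have hconc_c : ∀ z : ℝ, α / 2 ≤ ‖G z‖ := by
    intro z
    have h1 := norm_sub_norm_le (F z) (G z)
    have h2 : ‖F z - G z‖ ≤ δ := by rw [norm_sub_rev]; exact hGF z
    have h3 : α ≤ ‖F z‖ := hnd z
    linarith
  -- local injectivity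
  have key : ∀ a b : ℝ, g a = g b → |a - b| ≤ r → a = b := by
    intro a b hab habr
    set w := F b with hw_def
    have hw : α ≤ ‖w‖ := hnd b
    have hmvt : ‖(g a - a • w) - (g b - b • w)‖ ≤ (α/4) * ‖a - b‖ := by
      apply (convex_uIcc b a).norm_image_sub_le_of_norm_hasDerivWithin_le
        (f' := fun z => G z - w) ?_ ?_ Set.left_mem_uIcc Set.right_mem_uIcc
      · intro z hz
        have h := (hgd z).sub ((hasDerivAt_id z).smul_const w)
        simp only [one_smul] at h
        exact h.hasDerivWithinAt
      · intro z hz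
        have hz' : |z - b| ≤ |a - b| := Set.abs_sub_left_of_mem_uIcc hz
        have h1 : ‖G z - F z‖ ≤ δ := hGF z
        have h2 : ‖F z - F b‖ ≤ α/8 := hFuc z b (hz'.trans habr)
        have h3 : G z - w = (G z - F z) + (F z - F b) := by rw [hw_def]; abel
        calc ‖G z - w‖ = ‖(G z - F z) + (F z - F b)‖ := by rw [h3]
          _ ≤ ‖G z - F z‖ + ‖F z - F b‖ := norm_add_le _ _
          _ ≤ α/4 := by linarith
    have hnorm : ‖(g a - a • w) - (g b - b • w)‖ = |a - b| * ‖w‖ := by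
      rw [hab]
      have h : (g b - a • w) - (g b - b • w) = -((a - b) • w) := by
        rw [sub_smul]; abel
      rw [h, norm_neg, norm_smul, Real.norm_eq_abs]
    rw [hnorm, Real.norm_eq_abs] at hmvt
    have hab0 : |a - b| = 0 := by nlinarith [abs_nonneg (a - b)]
    have := abs_eq_zero.1 hab0
    linarith [sub_eq_zero.1 this]
  -- conclusion (a)
  have hconc_a : ∀ z₁ z₂ : ℝ, g z₁ = g z₂ → ∃ k : ℤ, z₁ - z₂ = 2 * π * k := by
    intro z₁ z₂ heq
    obtain ⟨s, hs, k, hd⟩ := reduce_mod (z₁ - z₂)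
    rcases le_or_gt s r with hcase1 | hcase1
    · refine ⟨k, ?_⟩
      have hgz : g (z₂ + 2*π*k) = g z₁ := by rw [hgper', ← heq]
      have habs : |z₁ - (z₂ + 2*π*k)| ≤ r := by
        have : z₁ - (z₂ + 2*π*k) = s := by linarith [hd]
        rw [this, abs_of_nonneg hs.1]; exact hcase1
      have := key z₁ (z₂ + 2*π*k) hgz.symm habs
      linarith [this]
    rcases le_or_gt (2*π - r) s with hcase2 | hcase2
    · refine ⟨k + 1, ?_⟩
      have hgz : g (z₂ + 2*π*(k+1)) = g z₁ := by
        have := hgper' z₂ (k+1)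
        push_cast at this
        rw [show z₂ + 2*π*((k:ℝ)+1) = z₂ + 2*π*(↑(k+1):ℝ) by push_cast; ring]
        rw [hgper', ← heq]
      have habs : |z₁ - (z₂ + 2*π*((k:ℝ)+1))| ≤ r := by
        have h1 : z₁ - (z₂ + 2*π*((k:ℝ)+1)) = s - 2*π := by linarith [hd]
        rw [h1, abs_of_nonpos (by linarith [hs.2])]
        linarith
      have h2 : z₁ = z₂ + 2*π*((k:ℝ)+1) := by
        apply key z₁ (z₂ + 2*π*((k:ℝ)+1)) _ habs
        · rw [show z₂ + 2*π*((k:ℝ)+1) = z₂ + 2*π*(↑(k+1):ℝ) by push_cast; ring] at hgz ⊢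
          exact hgz.symm
      push_cast
      linarith [h2]
    · exfalso
      obtain ⟨y, hy, j, hz₂⟩ := reduce_mod z₂
      have hyK : (y, s) ∈ Set.Icc (0:ℝ) (2*π) ×ˢ Set.Icc r (2*π - r) :=
        ⟨⟨hy.1, hy.2.le⟩, ⟨hcase1.le, hcase2.le⟩⟩
      have hεle : ε ≤ ‖f (y + s) - f y‖ := by simpa using hp₀min hyK
      have hfy : f y = f z₂ := by rw [hz₂, hfper']
      have hfys : f (y + s) = f z₁ := by
        have h1 : y + s = (y + 2*π*j) + s - 2*π*j := by ring
        have h2 : f (y + s) = f (y + s + 2*π*j) := (hfper' (y+s) j).symm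
        have h3 : y + s + 2*π*j = z₂ + s := by rw [hz₂]; ring
        have h4 : z₁ = (z₂ + s) + 2*π*k := by linarith [hd]
        rw [h2, h3, h4, hfper']
      rw [hfy, hfys] at hεle
      have htri : ‖f z₁ - f z₂‖ ≤ 2*δ := by
        have h1 : f z₁ - f z₂ = (f z₁ - g z₁) + (g z₂ - f z₂) := by rw [heq]; abel
        calc ‖f z₁ - f z₂‖ = ‖(f z₁ - g z₁) + (g z₂ - f z₂)‖ := by rw [h1]
          _ ≤ ‖f z₁ - g z₁‖ + ‖g z₂ - f z₂‖ := norm_add_le _ _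
          _ ≤ 2*δ := by
              have := hfg z₁
              have h2 : ‖g z₂ - f z₂‖ ≤ δ := by rw [norm_sub_rev]; exact hfg z₂
              linarith
      linarith
  -- conclusion (b)
  have hconc_b : ∀ z : ℝ, ‖g z‖ ≠ 2 := by
    intro z hz2
    have h1 := hm_all z
    have h2 : |‖f z‖ - ‖g z‖| ≤ ‖f z - g z‖ := abs_norm_sub_norm_le _ _
    rw [hz2] at h2
    have := hfg z
    have habs : |‖f z‖ - 2| ≤ δ := h2.trans this
    linarith
  exact ⟨hconc_a, hconc_b, hconc_c⟩
end

section
/- Let A = {x ∈ ℝ² : 1 < ‖x‖ < 2} be the open annulus, and let u : ℝ² → ℝ be continuously differentiable on an open set containing the closure of A with u(x) = 0 whenever ‖x‖ = 2. Then for every ε ∈ (0, 1], ∫_{{x : 1 < ‖x‖ < 1 + ε}} |u(x)| dx ≤ 2√(2π) · ε · (∫_A ‖∇u(x)‖² dx)^{1/2}. -/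
open Real MeasureTheory Set

noncomputable def Complex.abs (z : ℂ) : ℝ := ‖z‖

@[simp]
theorem Complex.abs_apply (z : ℂ) : Complex.abs z = ‖z‖ := rfl

theorem Complex.norm_eq_abs (z : ℂ) : ‖z‖ = Complex.abs z := rfl

theorem Complex.continuous_abs : Continuous Complex.abs := continuous_norm

theorem Complex.polarCoord_symm_abs (p : ℝ × ℝ) :
    Complex.abs (Complex.polarCoord.symm p) = |p.1| := Complex.norm_polarCoord_symm p

lemma polar_annulus_aux (h : ℂ → ℝ) {a b : ℝ} (ha : 0 ≤ a) :
    ∫ z in {z : ℂ | a < Complex.abs z ∧ Complex.abs z < b}, h z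
      = ∫ p in Ioo a b ×ˢ Ioo (-π) π, p.1 * h (Complex.polarCoord.symm p) := by
  have hS : MeasurableSet {z : ℂ | a < Complex.abs z ∧ Complex.abs z < b} := by
    have : IsOpen {z : ℂ | a < Complex.abs z ∧ Complex.abs z < b} := by
      apply IsOpen.inter
      · exact isOpen_lt continuous_const Complex.continuous_abs
      · exact isOpen_lt Complex.continuous_abs continuous_const
    exact this.measurableSet
  have hT : MeasurableSet (Ioo a b ×ˢ Ioo (-π) π : Set (ℝ × ℝ)) :=
    (measurableSet_Ioo.prod measurableSet_Ioo)
  rw [← integral_indicator hS,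
    ← Complex.integral_comp_polarCoord_symm
      ((fun z => indicator {z : ℂ | a < Complex.abs z ∧ Complex.abs z < b} h z))]
  have : ∀ p ∈ polarCoord.target,
      p.1 • indicator {z : ℂ | a < Complex.abs z ∧ Complex.abs z < b} h (Complex.polarCoord.symm p)
      = indicator (Ioo a b ×ˢ Ioo (-π) π) (fun p : ℝ × ℝ => p.1 * h (Complex.polarCoord.symm p)) p := by
    rintro ⟨r, θ⟩ hp
    rw [polarCoord_target] at hp
    have hr : 0 < r := hp.1
    have habs : Complex.abs (Complex.polarCoord.symm (r, θ)) = r := by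
      rw [Complex.polarCoord_symm_abs]; exact abs_of_pos hr
    by_cases hmem : a < r ∧ r < b
    · rw [indicator_of_mem, indicator_of_mem, smul_eq_mul]
      · exact ⟨⟨hmem.1, hmem.2⟩, hp.2⟩
      · simp only [mem_setOf_eq, habs]; exact hmem
    · rw [indicator_of_notMem, indicator_of_notMem, smul_zero]
      · rintro ⟨h1, _⟩; exact hmem ⟨h1.1, h1.2⟩
      · simp only [mem_setOf_eq, habs]; exact hmem
  rw [setIntegral_congr_fun polarCoord.open_target.measurableSet this,
    setIntegral_indicator hT]
  congr 1
  rw [inter_eq_self_of_subset_right]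
  rw [polarCoord_target]
  intro p hp
  exact ⟨lt_of_le_of_lt ha hp.1.1, hp.2⟩

lemma radial_bound_aux (v : ℂ → ℝ) (U' : Set ℂ) (hU' : IsOpen U') (hv : ContDiffOn ℝ 1 v U')
    (hK : ∀ z : ℂ, 1 ≤ Complex.abs z → Complex.abs z ≤ 2 → z ∈ U')
    (hb : ∀ z : ℂ, Complex.abs z = 2 → v z = 0)
    (w : ℂ) (hw : Complex.abs w = 1) (r : ℝ) (hr1 : 1 ≤ r) (hr2 : r ≤ 2) :
    |v (r • w)| ≤ ∫ t in Ioo (1:ℝ) 2, ‖fderiv ℝ v (t • w)‖ := by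
  have habs : ∀ t : ℝ, 0 ≤ t → Complex.abs (t • w) = t := by
    intro t ht
    rw [← Complex.norm_eq_abs, norm_smul, Complex.norm_eq_abs, hw, Real.norm_eq_abs,
      abs_of_nonneg ht, mul_one]
  have hseg : ∀ t : ℝ, 1 ≤ t → t ≤ 2 → (t • w) ∈ U' := by
    intro t h1 h2
    exact hK _ (by rw [habs t (by linarith)]; exact h1) (by rw [habs t (by linarith)]; exact h2)
  have hdiff : ∀ t : ℝ, 1 ≤ t → t ≤ 2 →
      HasDerivAt (fun s : ℝ => v (s • w)) ((fderiv ℝ v (t • w)) w) t := by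
    intro t h1 h2
    have hF : HasFDerivAt v (fderiv ℝ v (t • w)) (t • w) := by
      have : DifferentiableAt ℝ v (t • w) :=
        (hv.differentiableOn one_ne_zero).differentiableAt (hU'.mem_nhds (hseg t h1 h2))
      exact this.hasFDerivAt
    have hg : HasDerivAt (fun s : ℝ => s • w) w t := by
      simpa using (hasDerivAt_id t).smul_const w
    exact hF.comp_hasDerivAt t hg
  have hcf : ContinuousOn (fun z => fderiv ℝ v z) U' :=
    hv.continuousOn_fderiv_of_isOpen hU' le_rfl
  have hcont : ContinuousOn (fun t : ℝ => (fderiv ℝ v (t • w)) w) (Icc 1 2) := by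
    apply ContinuousOn.clm_apply _ continuousOn_const
    exact hcf.comp (Continuous.continuousOn (by fun_prop)) (fun t ht => hseg t ht.1 ht.2)
  have hcontn : ContinuousOn (fun t : ℝ => ‖fderiv ℝ v (t • w)‖) (Icc 1 2) :=
    (hcf.comp (Continuous.continuousOn (by fun_prop)) (fun t ht => hseg t ht.1 ht.2)).norm
  have hint : IntervalIntegrable (fun t : ℝ => (fderiv ℝ v (t • w)) w) volume r 2 :=
    (hcont.mono (by rw [uIcc_of_le hr2]; exact Icc_subset_Icc hr1 le_rfl)).intervalIntegrable
  have hftc : ∫ t in r..2, (fderiv ℝ v (t • w)) w = v ((2:ℝ) • w) - v (r • w) := by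
    apply intervalIntegral.integral_eq_sub_of_hasDerivAt (f := fun s : ℝ => v (s • w))
    · intro t ht
      rw [uIcc_of_le hr2] at ht
      exact hdiff t (le_trans hr1 ht.1) ht.2
    · exact hint
  have hv2 : v ((2:ℝ) • w) = 0 := hb _ (habs 2 (by norm_num))
  have key : |v (r • w)| = |∫ t in r..2, (fderiv ℝ v (t • w)) w| := by
    rw [hftc, hv2, zero_sub, abs_neg]
  rw [key]
  have step1 : |∫ t in r..2, (fderiv ℝ v (t • w)) w| ≤ ∫ t in r..2, ‖fderiv ℝ v (t • w)‖ := by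
    calc |∫ t in r..2, (fderiv ℝ v (t • w)) w| ≤ ∫ t in r..2, ‖(fderiv ℝ v (t • w)) w‖ := by
          simpa using intervalIntegral.norm_integral_le_integral_norm (μ := volume)
            (f := fun t : ℝ => (fderiv ℝ v (t • w)) w) hr2
      _ ≤ ∫ t in r..2, ‖fderiv ℝ v (t • w)‖ := by
          apply intervalIntegral.integral_mono_on hr2
          · exact (hcont.mono (by exact Icc_subset_Icc hr1 le_rfl)).norm.intervalIntegrable_of_Icc hr2
          · exact (hcontn.mono (Icc_subset_Icc hr1 le_rfl)).intervalIntegrable_of_Icc hr2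
          · intro t ht
            calc ‖(fderiv ℝ v (t • w)) w‖ ≤ ‖fderiv ℝ v (t • w)‖ * ‖w‖ :=
                  (fderiv ℝ v (t • w)).le_opNorm w
              _ = ‖fderiv ℝ v (t • w)‖ := by rw [Complex.norm_eq_abs, hw, mul_one]
  have step2 : ∫ t in r..2, ‖fderiv ℝ v (t • w)‖ ≤ ∫ t in (1:ℝ)..2, ‖fderiv ℝ v (t • w)‖ := by
    apply intervalIntegral.integral_mono_interval hr1 hr2 le_rfl
    · filter_upwards with t using norm_nonneg _
    · exact hcontn.intervalIntegrable_of_Icc (by norm_num)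
  have step3 : ∫ t in (1:ℝ)..2, ‖fderiv ℝ v (t • w)‖ = ∫ t in Ioo (1:ℝ) 2, ‖fderiv ℝ v (t • w)‖ := by
    rw [intervalIntegral.integral_of_le (by norm_num), integral_Ioc_eq_integral_Ioo]
  linarith [step1, step2, step3.symm.le]

lemma mem_closure_annulus_aux {E : Type*} [NormedAddCommGroup E] [NormedSpace ℝ E] (x : E)
    (h1 : 1 ≤ ‖x‖) (h2 : ‖x‖ ≤ 2) : x ∈ closure {y : E | 1 < ‖y‖ ∧ ‖y‖ < 2} := by
  have hx0 : (0:ℝ) < ‖x‖ := by linarith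
  set a : ℕ → ℝ := fun n => 1 / (n + 1) with ha
  have ha0 : ∀ n : ℕ, 0 < a n := fun n => by positivity
  have ha1 : ∀ n : ℕ, a n ≤ 1 := by
    intro n
    rw [ha]
    rw [div_le_one (by positivity)]
    simp
  set c : ℕ → ℝ := fun n => (‖x‖ + a n * (3/2 - ‖x‖)) / ‖x‖ with hc
  have hnorm : ∀ n : ℕ, ‖c n • x‖ = ‖x‖ + a n * (3/2 - ‖x‖) := by
    intro n
    have hpos : 0 < ‖x‖ + a n * (3/2 - ‖x‖) := by
      have := ha0 n; have := ha1 n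
      nlinarith
    rw [norm_smul, Real.norm_eq_abs, hc, abs_of_pos (by positivity)]
    field_simp
  have hmem : ∀ n : ℕ, c n • x ∈ {y : E | 1 < ‖y‖ ∧ ‖y‖ < 2} := by
    intro n
    have h0 := ha0 n; have h1' := ha1 n
    constructor
    · rw [hnorm n]; nlinarith
    · rw [hnorm n]; nlinarith
  have htend : Filter.Tendsto (fun n : ℕ => c n • x) Filter.atTop (nhds x) := by
    have hca : Filter.Tendsto c Filter.atTop (nhds 1) := by
      have haz : Filter.Tendsto a Filter.atTop (nhds 0) := tendsto_one_div_add_atTop_nhds_zero_nat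
      have : Filter.Tendsto (fun n => (‖x‖ + a n * (3/2 - ‖x‖)) / ‖x‖) Filter.atTop
          (nhds ((‖x‖ + 0 * (3/2 - ‖x‖)) / ‖x‖)) := by
        apply Filter.Tendsto.div_const
        exact (tendsto_const_nhds.add (haz.mul_const _))
      simpa [hx0.ne'] using this
    have := hca.smul_const x
    simpa using this
  exact mem_closure_of_tendsto htend (Filter.Eventually.of_forall hmem)

set_option maxHeartbeats 1000000 in
/-- Thin-annulus estimate: if `u` is `C¹` on a neighborhood of the closed annulus
`{1 ≤ ‖x‖ ≤ 2}` in `ℝ²` and vanishes on the outer boundary `{‖x‖ = 2}`, then for every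
`0 < ε ≤ 1` the mass of `u` on the thin annular layer `{1 < ‖x‖ < 1 + ε}` is controlled by
`2√(2π)·ε` times the `L²` norm of the gradient of `u` on the annulus `{1 < ‖x‖ < 2}`. -/
theorem thin_annulus_estimate
    (u : EuclideanSpace ℝ (Fin 2) → ℝ)
    (U : Set (EuclideanSpace ℝ (Fin 2))) (hU : IsOpen U)
    (hsub : closure {x : EuclideanSpace ℝ (Fin 2) | 1 < ‖x‖ ∧ ‖x‖ < 2} ⊆ U)
    (hu : ContDiffOn ℝ 1 u U)
    (hbc : ∀ x : EuclideanSpace ℝ (Fin 2), ‖x‖ = 2 → u x = 0)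
    (ε : ℝ) (hε0 : 0 < ε) (hε1 : ε ≤ 1) :
    ∫ x in {x : EuclideanSpace ℝ (Fin 2) | 1 < ‖x‖ ∧ ‖x‖ < 1 + ε}, |u x| ≤
      2 * Real.sqrt (2 * π) * ε *
        Real.sqrt (∫ x in {x : EuclideanSpace ℝ (Fin 2) | 1 < ‖x‖ ∧ ‖x‖ < 2},
          ‖gradient u x‖ ^ 2) := by
    classical
  set L := Complex.orthonormalBasisOneI.repr with hLdef
  set v : ℂ → ℝ := fun z => u (L z) with hvdef
  set U' : Set ℂ := ⇑L ⁻¹' U with hU'def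
  have hU' : IsOpen U' := hU.preimage L.continuous
  have hnormL : ∀ z : ℂ, ‖L z‖ = Complex.abs z := fun z => by
    rw [L.norm_map, Complex.norm_eq_abs]
  have hK' : ∀ z : ℂ, 1 ≤ Complex.abs z → Complex.abs z ≤ 2 → z ∈ U' := by
    intro z h1 h2
    exact hsub (mem_closure_annulus_aux (L z) (by rw [hnormL]; exact h1)
      (by rw [hnormL]; exact h2))
  have hLcd : ContDiff ℝ 1 (⇑L) := L.toContinuousLinearEquiv.contDiff
  have hv : ContDiffOn ℝ 1 v U' := hu.comp hLcd.contDiffOn (fun z hz => hz)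
  have hb' : ∀ z : ℂ, Complex.abs z = 2 → v z = 0 := fun z hz =>
    hbc (L z) (by rw [hnormL]; exact hz)
  set f : ℂ → ℝ := fun z => ‖fderiv ℝ v z‖ with hfdef
  have hfm : Measurable f := (measurable_fderiv ℝ v).norm
  have hcf : ContinuousOn (fun z => fderiv ℝ v z) U' :=
    hv.continuousOn_fderiv_of_isOpen hU' le_rfl
  set K : Set ℂ := {z : ℂ | 1 ≤ Complex.abs z ∧ Complex.abs z ≤ 2} with hKdef
  have hKsub : K ⊆ U' := fun z hz => hK' z hz.1 hz.2
  have hKcpt : IsCompact K := by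
    have hcl : IsClosed K := by
      have : K = {z : ℂ | 1 ≤ Complex.abs z} ∩ {z : ℂ | Complex.abs z ≤ 2} := rfl
      rw [this]
      exact (isClosed_le continuous_const Complex.continuous_abs).inter
        (isClosed_le Complex.continuous_abs continuous_const)
    have hbd : Bornology.IsBounded K := by
      apply Bornology.IsBounded.subset (Metric.isBounded_closedBall (x := (0:ℂ)) (r := 2))
      intro z hz
      rw [Metric.mem_closedBall, dist_zero_right, Complex.norm_eq_abs]
      exact hz.2
    exact Metric.isCompact_of_isClosed_isBounded hcl hbd
  obtain ⟨M, hM⟩ := hKcpt.exists_bound_of_continuousOn (hcf.mono hKsub)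
  have h1K : (1:ℂ) ∈ K := by constructor <;> simp
  have hM0 : 0 ≤ M := le_trans (norm_nonneg _) (hM 1 h1K)
  have hfleM : ∀ z ∈ K, f z ≤ M := hM
  -- polar coordinate basics
  have hsymm_cont : Continuous (fun p : ℝ × ℝ => Complex.polarCoord.symm p) := by
    simp only [Complex.polarCoord_symm_apply]
    fun_prop
  set w : ℝ → ℂ := fun θ => Complex.polarCoord.symm (1, θ) with hwdef
  have hsymm_smul : ∀ p : ℝ × ℝ, Complex.polarCoord.symm p = p.1 • w p.2 := by
    intro p
    simp only [hwdef, Complex.polarCoord_symm_apply, Complex.real_smul]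
    push_cast
    ring
  have hw1 : ∀ θ : ℝ, Complex.abs (w θ) = 1 := by
    intro θ
    rw [hwdef]
    simp only []
    rw [Complex.polarCoord_symm_abs]
    norm_num
  have habs_smul : ∀ (t θ : ℝ), 0 ≤ t → Complex.abs (t • w θ) = t := by
    intro t θ ht
    rw [← Complex.norm_eq_abs, norm_smul, Complex.norm_eq_abs, hw1 θ, Real.norm_eq_abs,
      abs_of_nonneg ht, mul_one]
  set G : ℝ → ℝ := fun θ => ∫ t in Ioo (1:ℝ) 2, f (t • w θ) with hGdef
  have hradial : ∀ (r θ : ℝ), 1 ≤ r → r ≤ 2 → |v (r • w θ)| ≤ G θ := fun r θ h1 h2 =>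
    radial_bound_aux v U' hU' hv hK' hb' (w θ) (hw1 θ) r h1 h2
  have hsmulK : ∀ (t θ : ℝ), 1 ≤ t → t ≤ 2 → (t • w θ) ∈ K := by
    intro t θ h1 h2
    constructor
    · rw [habs_smul t θ (by linarith)]; exact h1
    · rw [habs_smul t θ (by linarith)]; exact h2
  have hrayc : ∀ θ : ℝ, ContinuousOn (fun t : ℝ => f (t • w θ)) (Icc 1 2) := by
    intro θ
    apply ContinuousOn.norm
    apply hcf.comp (Continuous.continuousOn (by fun_prop))
    intro t ht
    exact hKsub (hsmulK t θ ht.1 ht.2)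
  have hGint : ∀ θ : ℝ, IntegrableOn (fun t : ℝ => f (t • w θ)) (Ioo 1 2) := by
    intro θ
    exact ((hrayc θ).integrableOn_compact isCompact_Icc).mono_set Ioo_subset_Icc_self
  have hG0 : ∀ θ, 0 ≤ G θ := fun θ =>
    setIntegral_nonneg measurableSet_Ioo (fun t _ => norm_nonneg _)
  have hGM : ∀ θ, G θ ≤ M := by
    intro θ
    have h1 : G θ ≤ ∫ _t in Ioo (1:ℝ) 2, M := by
      apply setIntegral_mono_on (hGint θ) _ measurableSet_Ioo
      · intro t ht
        exact hfleM _ (hsmulK t θ ht.1.le ht.2.le)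
      · exact integrableOn_const (by rw [Real.volume_Ioo]; exact ENNReal.ofReal_ne_top)
    have h2 : ∫ _t in Ioo (1:ℝ) 2, M = M := by
      rw [setIntegral_const, Real.volume_real_Ioo, smul_eq_mul]
      norm_num
    linarith
  have hGmeas : StronglyMeasurable G := by
    have hc2 : Continuous (fun q : ℝ × ℝ => q.2 • w q.1) := by
      simp only [hwdef, Complex.polarCoord_symm_apply]
      fun_prop
    have hsm : StronglyMeasurable (fun q : ℝ × ℝ => f (q.2 • w q.1)) :=
      (hfm.comp hc2.measurable).stronglyMeasurable
    exact hsm.integral_prod_right'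
  -- boxes
  set boxe : Set (ℝ × ℝ) := Ioo (1:ℝ) (1+ε) ×ˢ Ioo (-π) π with hboxe
  set box2 : Set (ℝ × ℝ) := Ioo (1:ℝ) 2 ×ˢ Ioo (-π) π with hbox2
  have hboxeM : MeasurableSet boxe := measurableSet_Ioo.prod measurableSet_Ioo
  have hbox2M : MeasurableSet box2 := measurableSet_Ioo.prod measurableSet_Ioo
  have hvolbox2 : volume box2 = ENNReal.ofReal (2*π) := by
    rw [hbox2, Measure.volume_eq_prod, Measure.prod_prod, Real.volume_Ioo, Real.volume_Ioo,
      ← ENNReal.ofReal_mul (by norm_num)]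
    congr 1
    ring
  have hvolboxe : volume boxe < ⊤ := by
    rw [hboxe, Measure.volume_eq_prod, Measure.prod_prod, Real.volume_Ioo, Real.volume_Ioo,
      ← ENNReal.ofReal_mul (by linarith)]
    exact ENNReal.ofReal_lt_top
  -- transfers to ℂ
  have hpre_thin : ⇑L ⁻¹' {x : EuclideanSpace ℝ (Fin 2) | 1 < ‖x‖ ∧ ‖x‖ < 1+ε}
      = {z : ℂ | 1 < Complex.abs z ∧ Complex.abs z < 1+ε} := by
    ext z
    simp [hnormL z]
  have hpre_ann : ⇑L ⁻¹' {x : EuclideanSpace ℝ (Fin 2) | 1 < ‖x‖ ∧ ‖x‖ < 2}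
      = {z : ℂ | 1 < Complex.abs z ∧ Complex.abs z < 2} := by
    ext z
    simp [hnormL z]
  have htransfer1 : ∫ x in {x : EuclideanSpace ℝ (Fin 2) | 1 < ‖x‖ ∧ ‖x‖ < 1 + ε}, |u x|
      = ∫ z in {z : ℂ | 1 < Complex.abs z ∧ Complex.abs z < 1+ε}, |v z| := by
    rw [← (L.measurePreserving.setIntegral_preimage_emb (L.toHomeomorph.measurableEmbedding)
      (fun x => |u x|) {x : EuclideanSpace ℝ (Fin 2) | 1 < ‖x‖ ∧ ‖x‖ < 1 + ε}), hpre_thin]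
  have hannM : MeasurableSet {z : ℂ | 1 < Complex.abs z ∧ Complex.abs z < 2} := by
    have : IsOpen {z : ℂ | 1 < Complex.abs z ∧ Complex.abs z < 2} :=
      (isOpen_lt continuous_const Complex.continuous_abs).inter
        (isOpen_lt Complex.continuous_abs continuous_const)
    exact this.measurableSet
  have hgrad_eq : ∀ z ∈ {z : ℂ | 1 < Complex.abs z ∧ Complex.abs z < 2},
      ‖gradient u (L z)‖ ^ 2 = f z ^ 2 := by
    intro z hz
    have hzU : (L z) ∈ U := hsub (subset_closure ⟨by rw [hnormL]; exact hz.1,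
      by rw [hnormL]; exact hz.2⟩)
    have hdiffu : DifferentiableAt ℝ u (L z) :=
      (hu.differentiableOn one_ne_zero).differentiableAt (hU.mem_nhds hzU)
    have h1 : ‖gradient u (L z)‖ = ‖fderiv ℝ u (L z)‖ := by
      rw [gradient]
      exact LinearIsometryEquiv.norm_map _ _
    have h3 : fderiv ℝ (⇑L) z = (L.toContinuousLinearEquiv : ℂ →L[ℝ] _) :=
      L.toContinuousLinearEquiv.fderiv
    have h4 : fderiv ℝ v z = (fderiv ℝ u (L z)).comp (L.toContinuousLinearEquiv : ℂ →L[ℝ] _) := by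
      rw [← h3]
      exact fderiv_comp z hdiffu (L.toContinuousLinearEquiv.differentiableAt)
    have h2 : f z = ‖fderiv ℝ u (L z)‖ := by
      rw [hfdef]
      simp only []
      rw [h4]
      exact (fderiv ℝ u (L z)).opNorm_comp_linearIsometryEquiv L
    rw [h1, h2]
  have htransfer2 : ∫ x in {x : EuclideanSpace ℝ (Fin 2) | 1 < ‖x‖ ∧ ‖x‖ < 2}, ‖gradient u x‖^2
      = ∫ z in {z : ℂ | 1 < Complex.abs z ∧ Complex.abs z < 2}, f z ^ 2 := by
    rw [← (L.measurePreserving.setIntegral_preimage_emb (L.toHomeomorph.measurableEmbedding)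
      (fun x => ‖gradient u x‖^2) {x : EuclideanSpace ℝ (Fin 2) | 1 < ‖x‖ ∧ ‖x‖ < 2}), hpre_ann]
    exact setIntegral_congr_fun hannM hgrad_eq
  -- polar coordinates
  have hpolar1 : ∫ z in {z : ℂ | 1 < Complex.abs z ∧ Complex.abs z < 1+ε}, |v z|
      = ∫ p in boxe, p.1 * |v (Complex.polarCoord.symm p)| :=
    polar_annulus_aux (fun z => |v z|) zero_le_one
  have hpolar2 : ∫ z in {z : ℂ | 1 < Complex.abs z ∧ Complex.abs z < 2}, f z ^ 2
      = ∫ p in box2, p.1 * f (Complex.polarCoord.symm p) ^ 2 :=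
    polar_annulus_aux (fun z => f z ^ 2) zero_le_one
  -- membership facts
  have hsymm_in_K : ∀ p : ℝ × ℝ, 1 ≤ p.1 → p.1 ≤ 2 → Complex.polarCoord.symm p ∈ K := by
    intro p h1 h2
    rw [hsymm_smul p]
    exact hsmulK p.1 p.2 h1 h2
  -- integrabilities
  have hint1 : IntegrableOn (fun p : ℝ × ℝ => p.1 * |v (Complex.polarCoord.symm p)|) boxe := by
    have hc : ContinuousOn (fun p : ℝ × ℝ => p.1 * |v (Complex.polarCoord.symm p)|)
        (Icc (1:ℝ) (1+ε) ×ˢ Icc (-π) π) := by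
      apply ContinuousOn.mul (continuous_fst.continuousOn)
      apply ContinuousOn.abs
      apply (hv.continuousOn).comp hsymm_cont.continuousOn
      intro p hp
      exact hKsub (hsymm_in_K p hp.1.1 (by linarith [hp.1.2]))
    exact (hc.integrableOn_compact (isCompact_Icc.prod isCompact_Icc)).mono_set
      (prod_mono Ioo_subset_Icc_self Ioo_subset_Icc_self)
  have hmeasG2 : Measurable (fun p : ℝ × ℝ => p.1 * G p.2) :=
    measurable_fst.mul (hGmeas.measurable.comp measurable_snd)
  have hint2 : IntegrableOn (fun p : ℝ × ℝ => p.1 * G p.2) boxe := by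
    apply Integrable.mono' (g := fun _ : ℝ × ℝ => 2 * M)
    · exact integrableOn_const hvolboxe.ne
    · exact hmeasG2.aestronglyMeasurable
    · filter_upwards [ae_restrict_mem hboxeM] with p hp
      have h1 : (1:ℝ) < p.1 := hp.1.1
      have h2 : p.1 < 1 + ε := hp.1.2
      rw [Real.norm_eq_abs, abs_mul, abs_of_pos (by linarith : (0:ℝ) < p.1),
        abs_of_nonneg (hG0 p.2)]
      nlinarith [hGM p.2, hG0 p.2]
  have hgmeas : Measurable (fun p : ℝ × ℝ => f (Complex.polarCoord.symm p)) :=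
    hfm.comp hsymm_cont.measurable
  have hglem : ∀ p : ℝ × ℝ, p ∈ box2 → f (Complex.polarCoord.symm p) ≤ M := by
    intro p hp
    exact hfleM _ (hsymm_in_K p hp.1.1.le hp.1.2.le)
  have hvolbox2lt : volume box2 < ⊤ := by
    rw [hvolbox2]; exact ENNReal.ofReal_lt_top
  have hint3 : IntegrableOn (fun p : ℝ × ℝ => f (Complex.polarCoord.symm p)) box2 := by
    apply Integrable.mono' (g := fun _ : ℝ × ℝ => M)
    · exact integrableOn_const hvolbox2lt.ne
    · exact hgmeas.aestronglyMeasurable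
    · filter_upwards [ae_restrict_mem hbox2M] with p hp
      rw [Real.norm_eq_abs, abs_of_nonneg (norm_nonneg _)]
      exact hglem p hp
  have hint4 : IntegrableOn (fun p : ℝ × ℝ => f (Complex.polarCoord.symm p) ^ 2) box2 := by
    apply Integrable.mono' (g := fun _ : ℝ × ℝ => M ^ 2)
    · exact integrableOn_const hvolbox2lt.ne
    · exact (hgmeas.pow_const 2).aestronglyMeasurable
    · filter_upwards [ae_restrict_mem hbox2M] with p hp
      rw [Real.norm_eq_abs, abs_of_nonneg (sq_nonneg _)]
      exact pow_le_pow_left₀ (norm_nonneg _) (hglem p hp) 2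
  have hint5 : IntegrableOn (fun p : ℝ × ℝ => p.1 * f (Complex.polarCoord.symm p) ^ 2) box2 := by
    apply Integrable.mono' (g := fun _ : ℝ × ℝ => 2 * M ^ 2)
    · exact integrableOn_const hvolbox2lt.ne
    · exact (measurable_fst.mul (hgmeas.pow_const 2)).aestronglyMeasurable
    · filter_upwards [ae_restrict_mem hbox2M] with p hp
      have h1 : (1:ℝ) < p.1 := hp.1.1
      have h2 : p.1 < 2 := hp.1.2
      rw [Real.norm_eq_abs, abs_mul, abs_of_pos (by linarith : (0:ℝ) < p.1),
        abs_of_nonneg (sq_nonneg _)]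
      have := hglem p hp
      nlinarith [norm_nonneg (fderiv ℝ v (Complex.polarCoord.symm p)), sq_nonneg (f (Complex.polarCoord.symm p))]
  -- Fubini: ∫ over box2 of f∘symm equals ∫ G
  have hprodm2 : (volume.restrict (Ioo (1:ℝ) 2)).prod (volume.restrict (Ioo (-π) π))
      = volume.restrict box2 := by
    rw [Measure.prod_restrict, hbox2, ← Measure.volume_eq_prod]
  have hfub : ∫ p in box2, f (Complex.polarCoord.symm p) = ∫ θ in Ioo (-π) π, G θ := by
    have hi : Integrable (fun p : ℝ × ℝ => f (Complex.polarCoord.symm p))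
        ((volume.restrict (Ioo (1:ℝ) 2)).prod (volume.restrict (Ioo (-π) π))) := by
      rw [hprodm2]; exact hint3
    calc ∫ p in box2, f (Complex.polarCoord.symm p)
        = ∫ p, f (Complex.polarCoord.symm p)
            ∂((volume.restrict (Ioo (1:ℝ) 2)).prod (volume.restrict (Ioo (-π) π))) := by
          rw [hprodm2]
      _ = ∫ θ in Ioo (-π) π, ∫ t in Ioo (1:ℝ) 2, f (Complex.polarCoord.symm (t, θ)) :=
          integral_prod_symm _ hi
      _ = ∫ θ in Ioo (-π) π, G θ := by
          apply integral_congr_ae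
          filter_upwards with θ
          apply integral_congr_ae
          filter_upwards with t
          rw [hsymm_smul (t, θ)]
  -- separation on boxe
  have hprodme : (volume.restrict (Ioo (1:ℝ) (1+ε))).prod (volume.restrict (Ioo (-π) π))
      = volume.restrict boxe := by
    rw [Measure.prod_restrict, hboxe, ← Measure.volume_eq_prod]
  have hsep : ∫ p in boxe, p.1 * G p.2
      = (∫ r in Ioo (1:ℝ) (1+ε), r) * ∫ θ in Ioo (-π) π, G θ := by
    rw [← hprodme]
    exact integral_prod_mul (fun r : ℝ => r) G
  have hrint : ∫ r in Ioo (1:ℝ) (1+ε), r = ε + ε^2/2 := by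
    rw [← integral_Ioc_eq_integral_Ioo, ← intervalIntegral.integral_of_le (by linarith),
      integral_id]
    ring
  -- pointwise comparison on boxe
  have hmono1 : ∫ p in boxe, p.1 * |v (Complex.polarCoord.symm p)| ≤ ∫ p in boxe, p.1 * G p.2 := by
    apply setIntegral_mono_on hint1 hint2 hboxeM
    intro p hp
    have h1 : (1:ℝ) ≤ p.1 := hp.1.1.le
    have h2 : p.1 ≤ 2 := by linarith [hp.1.2]
    have hr := hradial p.1 p.2 h1 h2
    rw [hsymm_smul p]
    have hp0 : (0:ℝ) ≤ p.1 := by linarith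
    exact mul_le_mul_of_nonneg_left hr hp0
  -- Cauchy–Schwarz on box2
  haveI hfin : IsFiniteMeasure (volume.restrict box2) := by
    constructor
    rw [Measure.restrict_apply_univ]
    exact hvolbox2lt
  have hCS : ∫ p in box2, f (Complex.polarCoord.symm p)
      ≤ Real.sqrt (2*π) * Real.sqrt (∫ p in box2, f (Complex.polarCoord.symm p) ^ 2) := by
    have hpq : Real.HolderConjugate 2 2 := Real.HolderConjugate.two_two
    have hmem1 : MemLp (fun p : ℝ × ℝ => f (Complex.polarCoord.symm p)) (ENNReal.ofReal 2)
        (volume.restrict box2) := by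
      apply MemLp.of_bound hgmeas.aestronglyMeasurable M
      filter_upwards [ae_restrict_mem hbox2M] with p hp
      rw [Real.norm_eq_abs, abs_of_nonneg (norm_nonneg _)]
      exact hglem p hp
    have hmem2 : MemLp (fun _ : ℝ × ℝ => (1:ℝ)) (ENNReal.ofReal 2) (volume.restrict box2) :=
      memLp_const 1
    have h := integral_mul_le_Lp_mul_Lq_of_nonneg (μ := volume.restrict box2) hpq
      (Filter.Eventually.of_forall (fun p => norm_nonneg _))
      (Filter.Eventually.of_forall (fun _ => zero_le_one))
      hmem1 hmem2
    simp only [mul_one, Real.one_rpow] at h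
    rw [integral_const, measureReal_restrict_apply_univ, measureReal_def, hvolbox2,
      ENNReal.toReal_ofReal (by positivity), smul_eq_mul, mul_one] at h
    have hexp : ∀ x : ℝ, x ^ (2:ℝ) = x ^ (2:ℕ) := by
      intro x
      rw [show (2:ℝ) = ((2:ℕ):ℝ) by norm_num, Real.rpow_natCast]
    simp only [hexp] at h
    calc ∫ p in box2, f (Complex.polarCoord.symm p)
        ≤ (∫ p in box2, f (Complex.polarCoord.symm p) ^ (2:ℕ)) ^ ((1:ℝ)/2)
            * ((2:ℝ)*π) ^ ((1:ℝ)/2) := h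
      _ = Real.sqrt (2*π) * Real.sqrt (∫ p in box2, f (Complex.polarCoord.symm p) ^ 2) := by
          rw [Real.sqrt_eq_rpow, Real.sqrt_eq_rpow]
          ring
  have hmono2 : ∫ p in box2, f (Complex.polarCoord.symm p) ^ 2
      ≤ ∫ p in box2, p.1 * f (Complex.polarCoord.symm p) ^ 2 := by
    apply setIntegral_mono_on hint4 hint5 hbox2M
    intro p hp
    have h1 : (1:ℝ) ≤ p.1 := hp.1.1.le
    nlinarith [sq_nonneg (f (Complex.polarCoord.symm p))]
  -- final assembly
  have hGint0 : 0 ≤ ∫ θ in Ioo (-π) π, G θ :=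
    setIntegral_nonneg measurableSet_Ioo (fun θ _ => hG0 θ)
  have hI2nn : 0 ≤ ∫ p in box2, f (Complex.polarCoord.symm p) ^ 2 :=
    setIntegral_nonneg hbox2M (fun p _ => sq_nonneg _)
  have hsqrt_le : Real.sqrt (∫ p in box2, f (Complex.polarCoord.symm p) ^ 2)
      ≤ Real.sqrt (∫ p in box2, p.1 * f (Complex.polarCoord.symm p) ^ 2) :=
    Real.sqrt_le_sqrt hmono2
  rw [htransfer1, hpolar1, htransfer2, hpolar2]
  have hchain1 : ∫ p in boxe, p.1 * |v (Complex.polarCoord.symm p)|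
      ≤ (ε + ε^2/2) * ∫ θ in Ioo (-π) π, G θ := by
    rw [← hrint]
    calc ∫ p in boxe, p.1 * |v (Complex.polarCoord.symm p)| ≤ ∫ p in boxe, p.1 * G p.2 := hmono1
      _ = (∫ r in Ioo (1:ℝ) (1+ε), r) * ∫ θ in Ioo (-π) π, G θ := hsep
  have hchain2 : ∫ θ in Ioo (-π) π, G θ
      ≤ Real.sqrt (2*π) * Real.sqrt (∫ p in box2, p.1 * f (Complex.polarCoord.symm p) ^ 2) := by
    rw [← hfub]
    calc ∫ p in box2, f (Complex.polarCoord.symm p)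
        ≤ Real.sqrt (2*π) * Real.sqrt (∫ p in box2, f (Complex.polarCoord.symm p) ^ 2) := hCS
      _ ≤ Real.sqrt (2*π) * Real.sqrt (∫ p in box2, p.1 * f (Complex.polarCoord.symm p) ^ 2) :=
          mul_le_mul_of_nonneg_left hsqrt_le (Real.sqrt_nonneg _)
  have hεfac : ε + ε^2/2 ≤ 2 * ε := by nlinarith
  have hfac0 : 0 ≤ ε + ε^2/2 := by positivity
  calc ∫ p in boxe, p.1 * |v (Complex.polarCoord.symm p)|
      ≤ (ε + ε^2/2) * ∫ θ in Ioo (-π) π, G θ := hchain1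
    _ ≤ (ε + ε^2/2) * (Real.sqrt (2*π)
          * Real.sqrt (∫ p in box2, p.1 * f (Complex.polarCoord.symm p) ^ 2)) :=
        mul_le_mul_of_nonneg_left hchain2 hfac0
    _ ≤ (2 * ε) * (Real.sqrt (2*π)
          * Real.sqrt (∫ p in box2, p.1 * f (Complex.polarCoord.symm p) ^ 2)) := by
        apply mul_le_mul_of_nonneg_right hεfac
        positivity
    _ = 2 * Real.sqrt (2*π) * ε
          * Real.sqrt (∫ p in box2, p.1 * f (Complex.polarCoord.symm p) ^ 2) := by ring
end

section
/- Let H be a real inner product space, L : H → H a linear map, τ > 0, and z₀, ω₀, z ∈ H. Set ω = ω₀ + τ·z, and suppose that (1/τ)·⟨z − z₀, z⟩ + ‖Lz‖² + ⟨Lω, Lz⟩ = 0. Then ½‖z‖² + ½‖Lω‖² + τ‖Lz‖² + ½‖z − z₀‖² + ½‖L(ω − ω₀)‖² = ½‖z₀‖² + ½‖Lω₀‖². -/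
/-- Abstract discrete energy identity for one step of the plate subproblem of the Lie
operator-splitting scheme: if the new velocity `z`, old velocity `z₀`, old displacement
`ω₀`, updated displacement `ω = ω₀ + τ z`, and a linear map `L` satisfy the tested
time-discrete equation `(1/τ)⟨z - z₀, z⟩ + ‖Lz‖² + ⟨Lω, Lz⟩ = 0`, then the new energy plus
the dissipation `τ‖Lz‖²` plus the numerical dissipation equals the old energy. -/
theorem discrete_plate_energy_identity
    {H : Type*} [NormedAddCommGroup H] [InnerProductSpace ℝ H]
    (L : H →ₗ[ℝ] H) (τ : ℝ) (hτ : 0 < τ)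
    (z₀ ω₀ z ω : H) (hω : ω = ω₀ + τ • z)
    (hweak : (1 / τ) * (inner ℝ (z - z₀) z : ℝ) + ‖L z‖ ^ 2 + (inner ℝ (L ω) (L z) : ℝ) = 0) :
    (1 / 2) * ‖z‖ ^ 2 + (1 / 2) * ‖L ω‖ ^ 2 + τ * ‖L z‖ ^ 2
        + (1 / 2) * ‖z - z₀‖ ^ 2 + (1 / 2) * ‖L (ω - ω₀)‖ ^ 2
      = (1 / 2) * ‖z₀‖ ^ 2 + (1 / 2) * ‖L ω₀‖ ^ 2 := by
  subst hω
  simp only [map_add, map_smul, add_sub_cancel_left] at hweak ⊢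
  have h1 : (inner ℝ (z - z₀) z : ℝ) = ‖z‖ ^ 2 - inner ℝ z₀ z := by
    rw [inner_sub_left, real_inner_self_eq_norm_sq, real_inner_comm]
  have h3 : (inner ℝ (L ω₀ + τ • L z) (L z) : ℝ)
      = inner ℝ (L ω₀) (L z) + τ * ‖L z‖ ^ 2 := by
    rw [inner_add_left, real_inner_smul_left, real_inner_self_eq_norm_sq]
  have h4 : ‖L ω₀ + τ • L z‖ ^ 2
      = ‖L ω₀‖ ^ 2 + 2 * (τ * (inner ℝ (L ω₀) (L z) : ℝ)) + τ ^ 2 * ‖L z‖ ^ 2 := by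
    rw [norm_add_sq_real, real_inner_smul_right, norm_smul, Real.norm_eq_abs,
      abs_of_pos hτ]; ring
  have h5 : ‖z - z₀‖ ^ 2 = ‖z‖ ^ 2 - 2 * (inner ℝ z₀ z : ℝ) + ‖z₀‖ ^ 2 := by
    rw [norm_sub_sq_real, real_inner_comm]
  have h7 : ‖τ • L z‖ ^ 2 = τ ^ 2 * ‖L z‖ ^ 2 := by
    rw [norm_smul, Real.norm_eq_abs, abs_of_pos hτ]; ring
  rw [h1, h3] at hweak
  rw [h4, h5, h7]
  have hτ' : τ ≠ 0 := ne_of_gt hτ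
  field_simp at hweak
  nlinarith [hweak]
end
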